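/- Let F be a bounded, left-continuous function on the circle of circumference L with only finitely many discontinuities. If there exists a sequence N_p → ∞ such that for every p there is at least one fixed configuration (x_1^{(p)}, ..., x_{N_p}^{(p)}) on the circle, then ∫_0^L F(x) dx = 0, i.e. the force F is potential on the circle. -/

import Mathlib

open Real Filter Set Asymptotics

/-- The repulsion force `f(r) = r^{-a}`. -/
noncomputable def fpow (a r : ℝ) : ℝ := r ^ (-a)

/-- The clockwise gaps of a configuration `x 1 < ... < x N` on the circle of
circumference `L`: `Δ k = x (k+1) - x k` for `1 ≤ k ≤ N-1` and `Δ N = L - x N + x 1`. -/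
def cgap (L : ℝ) (N : ℕ) (x : ℕ → ℝ) (k : ℕ) : ℝ :=
  if k < N then x (k + 1) - x k else L - x N + x 1

/-- A configuration of `N` particles on the circle of circumference `L`,
variant with `0 ≤ x 1 < ... < x N < L`. -/
def CircleConfigA (L : ℝ) (N : ℕ) (x : ℕ → ℝ) : Prop :=
  0 ≤ x 1 ∧ (∀ k, 1 ≤ k → k < N → x k < x (k + 1)) ∧ x N < L

/-- A fixed (critical) configuration on the circle (variant `0 ≤ x 1`, `x N < L`):
`f(Δ (k-1)) + F (x k) - f(Δ k) = 0` for `k = 1, ..., N`, with `Δ 0 = Δ N`. -/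
def CircleFixedA (a L : ℝ) (F : ℝ → ℝ) (N : ℕ) (x : ℕ → ℝ) : Prop :=
  CircleConfigA L N x ∧
  ∀ k, 1 ≤ k → k ≤ N →
    fpow a (cgap L N x (if k = 1 then N else k - 1)) + F (x k) - fpow a (cgap L N x k) = 0

/-- A configuration of `N` particles on the circle of circumference `L`,
variant with `0 < x 1 < ... < x N ≤ L`. -/
def CircleConfigB (L : ℝ) (N : ℕ) (x : ℕ → ℝ) : Prop :=
  0 < x 1 ∧ (∀ k, 1 ≤ k → k < N → x k < x (k + 1)) ∧ x N ≤ L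

/-- A fixed (critical) configuration on the circle (variant `0 < x 1`, `x N ≤ L`):
`f(Δ (k-1)) + F (x k) - f(Δ k) = 0` for `k = 1, ..., N`, with `Δ 0 = Δ N`. -/
def CircleFixedB (a L : ℝ) (F : ℝ → ℝ) (N : ℕ) (x : ℕ → ℝ) : Prop :=
  CircleConfigB L N x ∧
  ∀ k, 1 ≤ k → k ≤ N →
    fpow a (cgap L N x (if k = 1 then N else k - 1)) + F (x k) - fpow a (cgap L N x k) = 0

/-- A fixed configuration of `N` particles on the segment `[0, L]` with constant
force `F`, completely inelastic boundary conditions, and `x 1 = 0`, `x N = L`. -/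
def SegmentFixed (a L F : ℝ) (N : ℕ) (x : ℕ → ℝ) : Prop :=
  x 1 = 0 ∧ x N = L ∧ (∀ k, 1 ≤ k → k < N → x k < x (k + 1)) ∧
  (∀ k, 2 ≤ k → k ≤ N - 1 → fpow a (x k - x (k - 1)) + F - fpow a (x (k + 1) - x k) = 0) ∧
  F - fpow a (x 2) ≤ 0 ∧ 0 ≤ F + fpow a (L - x (N - 1))

namespace FP

variable {a L C : ℝ} {F : ℝ → ℝ} {N : ℕ} {x : ℕ → ℝ}

lemma mono (hx : ∀ k, 1 ≤ k → k < N → x k < x (k + 1)) :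
    ∀ j k, 1 ≤ j → j ≤ k → k ≤ N → x j ≤ x k := by
  intro j k h1 hjk
  revert hjk
  intro hjk
  induction k, hjk using Nat.le_induction with
  | base => intro _; exact le_rfl
  | succ n hn ih =>
      intro hN
      exact le_trans (ih (by omega)) (le_of_lt (hx n (by omega) (by omega)))

lemma mem_Ico' (h : CircleConfigA L N x) {k : ℕ} (h1 : 1 ≤ k) (h2 : k ≤ N) :
    x k ∈ Set.Ico (0:ℝ) L :=
  ⟨le_trans h.1 (mono h.2.1 1 k le_rfl h1 h2),
   lt_of_le_of_lt (mono h.2.1 k N h1 h2 le_rfl) h.2.2⟩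

lemma cgap_pos (h : CircleConfigA L N x) {k : ℕ} (h1 : 1 ≤ k) (hkN : k ≤ N) :
    0 < cgap L N x k := by
  by_cases hk : k < N
  · simpa [cgap, hk] using sub_pos.mpr (h.2.1 k h1 hk)
  · simp only [cgap, hk, if_false]
    have h2 := h.2.2; have h3 := h.1; linarith

lemma sum_tel (hN : 1 ≤ N) : ∑ k ∈ Finset.Ico 1 N, (x (k + 1) - x k) = x N - x 1 := by
  rw [Finset.sum_Ico_eq_sum_range]
  have e : ∀ i ∈ Finset.range (N - 1), x (1 + i + 1) - x (1 + i)
      = (fun i => x (1 + i)) (i + 1) - (fun i => x (1 + i)) i := by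
    intro i _
    have h11 : 1 + i + 1 = 1 + (i + 1) := by omega
    rw [h11]
  rw [Finset.sum_congr rfl e, Finset.sum_range_sub (fun i => x (1 + i))]
  congr 2 <;> omega

lemma sum_cgap (h : CircleConfigA L N x) (hN : 1 ≤ N) :
    ∑ k ∈ Finset.Icc 1 N, cgap L N x k = L := by
  rw [← Finset.Ico_add_one_right_eq_Icc, Finset.sum_Ico_succ_top (by omega : 1 ≤ N)]
  have h1 : ∀ k ∈ Finset.Ico 1 N, cgap L N x k = x (k + 1) - x k := by
    intro k hk
    simp [cgap, (Finset.mem_Ico.mp hk).2]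
  rw [Finset.sum_congr rfl h1, sum_tel hN]
  have : cgap L N x N = L - x N + x 1 := by simp [cgap]
  rw [this]; ring

lemma fpow_cgap_eq (h : CircleFixedA a L F N x) :
    ∀ k, 1 ≤ k → k ≤ N →
      fpow a (cgap L N x k) = fpow a (cgap L N x N) + ∑ j ∈ Finset.Icc 1 k, F (x j) := by
  intro k h1
  induction k, h1 using Nat.le_induction with
  | base =>
      intro hk
      have e := h.2 1 le_rfl hk
      rw [if_pos rfl] at e
      simp only [Finset.Icc_self, Finset.sum_singleton]
      linarith
  | succ n hn ih =>
      intro hk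
      have e := h.2 (n + 1) (by omega) hk
      have hne : ¬ (n + 1 = 1) := by omega
      rw [if_neg hne] at e
      have hn1 : n + 1 - 1 = n := by omega
      rw [hn1] at e
      rw [Finset.sum_Icc_succ_top (by omega : 1 ≤ n + 1)]
      have ihn := ih (by omega)
      linarith

lemma sum_F_zero (h : CircleFixedA a L F N x) (hN : 1 ≤ N) :
    ∑ j ∈ Finset.Icc 1 N, F (x j) = 0 := by
  have := fpow_cgap_eq h N hN le_rfl
  linarith

lemma partial_bound (h : CircleFixedA a L F N x)
    (hFb : ∀ y ∈ Set.Ico (0:ℝ) L, |F y| ≤ C) (hC : 0 ≤ C)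
    {k : ℕ} (hk : k ≤ N) :
    |∑ j ∈ Finset.Icc 1 k, F (x j)| ≤ N * C := by
  calc |∑ j ∈ Finset.Icc 1 k, F (x j)| ≤ ∑ j ∈ Finset.Icc 1 k, |F (x j)| :=
        Finset.abs_sum_le_sum_abs _ _
    _ ≤ ∑ _j ∈ Finset.Icc 1 k, C := by
        refine Finset.sum_le_sum fun j hj => ?_
        rcases Finset.mem_Icc.mp hj with ⟨hj1, hj2⟩
        exact hFb _ (mem_Ico' h.1 hj1 (le_trans hj2 hk))
    _ = (k : ℝ) * C := by
        rw [Finset.sum_const, Nat.card_Icc]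
        simp [nsmul_eq_mul]
    _ ≤ (N : ℝ) * C := by
        have : (k : ℝ) ≤ N := by exact_mod_cast hk
        nlinarith


lemma exists_small (h : CircleConfigA L N x) (hN : 1 ≤ N) (hL : 0 < L) :
    ∃ k ∈ Finset.Icc 1 N, cgap L N x k ≤ L / N := by
  by_contra hc
  push_neg at hc
  have hne : (Finset.Icc 1 N).Nonempty := ⟨1, Finset.mem_Icc.mpr ⟨le_rfl, hN⟩⟩
  have hlt := Finset.sum_lt_sum_of_nonempty hne hc
  rw [sum_cgap h hN, Finset.sum_const, Nat.card_Icc, nsmul_eq_mul] at hlt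
  have hc1 : N + 1 - 1 = N := by omega
  rw [hc1] at hlt
  have hNne : (N : ℝ) ≠ 0 := by positivity
  have : (N : ℝ) * (L / N) = L := by field_simp
  rw [this] at hlt
  exact lt_irrefl L hlt

lemma exists_large (h : CircleConfigA L N x) (hN : 1 ≤ N) (hL : 0 < L) :
    ∃ k ∈ Finset.Icc 1 N, L / N ≤ cgap L N x k := by
  by_contra hc
  push_neg at hc
  have hne : (Finset.Icc 1 N).Nonempty := ⟨1, Finset.mem_Icc.mpr ⟨le_rfl, hN⟩⟩
  have hlt := Finset.sum_lt_sum_of_nonempty hne hc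
  rw [sum_cgap h hN, Finset.sum_const, Nat.card_Icc, nsmul_eq_mul] at hlt
  have hc1 : N + 1 - 1 = N := by omega
  rw [hc1] at hlt
  have hNne : (N : ℝ) ≠ 0 := by positivity
  have : (N : ℝ) * (L / N) = L := by field_simp
  rw [this] at hlt
  exact lt_irrefl L hlt

lemma fpow_anti (ha : 0 < a) {r s : ℝ} (hr : 0 < r) (hrs : r ≤ s) :
    fpow a s ≤ fpow a r :=
  Real.rpow_le_rpow_of_nonpos hr hrs (by linarith)

lemma mesh_bound (h : CircleFixedA a L F N x) (ha : 1 < a) (hL : 0 < L)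
    (hFb : ∀ y ∈ Set.Ico (0:ℝ) L, |F y| ≤ C) (hC : 0 ≤ C) (hN : 1 ≤ N)
    (hm : 0 < ((N : ℝ) / L) ^ a - 2 * N * C) :
    ∀ k ∈ Finset.Icc 1 N, cgap L N x k ≤ (((N : ℝ) / L) ^ a - 2 * N * C) ^ (-(1 / a)) := by
  have ha0 : (0:ℝ) < a := by linarith
  have hLN : (0:ℝ) < L / N := by positivity
  obtain ⟨k₀, hk₀mem, hk₀⟩ := exists_small h.1 hN hL
  rcases Finset.mem_Icc.mp hk₀mem with ⟨hk₀1, hk₀N⟩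
  -- fpow a (L / N) = ((N:ℝ)/L) ^ a
  have hfLN : fpow a (L / N) = ((N : ℝ) / L) ^ a := by
    rw [fpow, Real.rpow_neg (le_of_lt hLN), ← Real.inv_rpow (le_of_lt hLN), inv_div]
  have key : ∀ k ∈ Finset.Icc 1 N, ((N : ℝ) / L) ^ a - 2 * N * C ≤ fpow a (cgap L N x k) := by
    intro k hk
    rcases Finset.mem_Icc.mp hk with ⟨hk1, hkN⟩
    have e1 := fpow_cgap_eq h k hk1 hkN
    have e2 := fpow_cgap_eq h k₀ hk₀1 hk₀N
    have b1 := partial_bound h hFb hC (le_refl N) -- dummy; not used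
    have p1 := abs_le.mp (partial_bound h hFb hC hkN)
    have p2 := abs_le.mp (partial_bound h hFb hC hk₀N)
    have hanti : fpow a (L / N) ≤ fpow a (cgap L N x k₀) :=
      fpow_anti ha0 (cgap_pos h.1 hk₀1 hk₀N) hk₀
    rw [hfLN] at hanti
    linarith
  intro k hk
  rcases Finset.mem_Icc.mp hk with ⟨hk1, hkN⟩
  have hgpos := cgap_pos h.1 hk1 hkN
  have hkey := key k hk
  rw [fpow] at hkey
  have h2 : (((N : ℝ) / L) ^ a - 2 * N * C) ^ (-(1 / a))
      ≥ ((cgap L N x k) ^ (-a)) ^ (-(1 / a)) :=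
    Real.rpow_le_rpow_of_nonpos hm hkey (by rw [neg_nonpos]; positivity)
  have h3 : ((cgap L N x k) ^ (-a)) ^ (-(1 / a)) = cgap L N x k := by
    rw [← Real.rpow_mul (le_of_lt hgpos), show -a * -(1 / a) = 1 by field_simp]
    exact Real.rpow_one _
  rw [h3] at h2
  exact h2

lemma sum_bound (h : CircleFixedA a L F N x) (ha : 1 < a) (hL : 0 < L)
    (hFb : ∀ y ∈ Set.Ico (0:ℝ) L, |F y| ≤ C) (hC : 0 ≤ C) (hN : 1 ≤ N)
    (hm : 0 < ((N : ℝ) / L) ^ a - 2 * N * C) :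
    |∑ k ∈ Finset.Icc 1 N, F (x k) * cgap L N x k|
      ≤ 2 * C * ((N : ℝ) * ((((N : ℝ) / L) ^ a - 2 * N * C) ^ (-(1 / a))) - L) := by
  set δ : ℝ := (((N : ℝ) / L) ^ a - 2 * N * C) ^ (-(1 / a)) with hδ
  have hNpos : (0:ℝ) < N := by exact_mod_cast hN
  have hNne : (N : ℝ) ≠ 0 := ne_of_gt hNpos
  have hmesh := mesh_bound h ha hL hFb hC hN hm
  -- δ - L/N ≥ 0
  obtain ⟨k₁, hk₁mem, hk₁⟩ := exists_large h.1 hN hL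
  have hb0 : 0 ≤ δ - L / N := by
    have := hmesh k₁ hk₁mem
    linarith
  -- rewrite the sum
  have e0 : ∑ k ∈ Finset.Icc 1 N, F (x k) * cgap L N x k
      = ∑ k ∈ Finset.Icc 1 N, F (x k) * (cgap L N x k - L / N) := by
    have e : ∀ k ∈ Finset.Icc 1 N, F (x k) * cgap L N x k
        = F (x k) * (cgap L N x k - L / N) + F (x k) * (L / N) := fun k _ => by ring
    rw [Finset.sum_congr rfl e, Finset.sum_add_distrib, ← Finset.sum_mul,
      sum_F_zero h hN, zero_mul, add_zero]
  -- sum of |t k| bound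
  have habs : ∑ k ∈ Finset.Icc 1 N, |cgap L N x k - L / N| ≤ 2 * N * (δ - L / N) := by
    have hsumt : ∑ k ∈ Finset.Icc 1 N, (cgap L N x k - L / N) = 0 := by
      rw [Finset.sum_sub_distrib, sum_cgap h.1 hN, Finset.sum_const, Nat.card_Icc,
        nsmul_eq_mul]
      have hc1 : N + 1 - 1 = N := by omega
      rw [hc1]
      field_simp
      simp
    have hterm : ∀ k ∈ Finset.Icc 1 N,
        |cgap L N x k - L / N| + (cgap L N x k - L / N) ≤ 2 * (δ - L / N) := by
      intro k hk
      have h1 : cgap L N x k - L / N ≤ δ - L / N := by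
        have := hmesh k hk; linarith
      rcases abs_cases (cgap L N x k - L / N) with ⟨he, _⟩ | ⟨he, _⟩ <;> rw [he] <;> linarith
    have := Finset.sum_le_sum hterm
    rw [Finset.sum_add_distrib, hsumt, add_zero, Finset.sum_const, Nat.card_Icc,
      nsmul_eq_mul] at this
    have hc1 : N + 1 - 1 = N := by omega
    rw [hc1] at this
    linarith
  rw [e0]
  calc |∑ k ∈ Finset.Icc 1 N, F (x k) * (cgap L N x k - L / N)|
      ≤ ∑ k ∈ Finset.Icc 1 N, |F (x k) * (cgap L N x k - L / N)| :=
        Finset.abs_sum_le_sum_abs _ _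
    _ ≤ ∑ k ∈ Finset.Icc 1 N, C * |cgap L N x k - L / N| := by
        refine Finset.sum_le_sum fun k hk => ?_
        rw [abs_mul]
        rcases Finset.mem_Icc.mp hk with ⟨hk1, hk2⟩
        exact mul_le_mul_of_nonneg_right (hFb _ (mem_Ico' h.1 hk1 hk2)) (abs_nonneg _)
    _ = C * ∑ k ∈ Finset.Icc 1 N, |cgap L N x k - L / N| := by rw [Finset.mul_sum]
    _ ≤ C * (2 * N * (δ - L / N)) := mul_le_mul_of_nonneg_left habs hC
    _ = 2 * C * ((N : ℝ) * δ - L) := by field_simp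

lemma delta_asymp (ha : 1 < a) (hL : 0 < L) (hC : 0 ≤ C) :
    (∀ᶠ n : ℕ in atTop, 0 < ((n : ℝ) / L) ^ a - 2 * n * C) ∧
    Tendsto (fun n : ℕ => (n : ℝ) * ((((n : ℝ) / L) ^ a - 2 * n * C) ^ (-(1 / a))))
      atTop (nhds L) ∧
    Tendsto (fun n : ℕ => (((n : ℝ) / L) ^ a - 2 * n * C) ^ (-(1 / a))) atTop (nhds 0) := by
  have ha0 : (0:ℝ) < a := by linarith
  set u : ℕ → ℝ := fun n => (1 / L) ^ a - 2 * C * (n : ℝ) ^ (1 - a) with hu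
  have h1 : Tendsto (fun n : ℕ => (n : ℝ) ^ (1 - a)) atTop (nhds 0) := by
    rw [show (1 - a) = -(a - 1) by ring]
    exact (tendsto_rpow_neg_atTop (by linarith)).comp tendsto_natCast_atTop_atTop
  have hulim : Tendsto u atTop (nhds ((1 / L) ^ a)) := by
    rw [hu]
    have h2 := (tendsto_const_nhds (α := ℕ) (f := atTop) (x := ((1 / L : ℝ)) ^ a)).sub
      (h1.const_mul (2 * C))
    simpa using h2
  have hkey : ∀ n : ℕ, 1 ≤ n → ((n : ℝ) / L) ^ a - 2 * n * C = (n : ℝ) ^ a * u n := by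
    intro n hn
    have hn0 : (0:ℝ) < n := by exact_mod_cast hn
    have e1 : ((n : ℝ) / L) ^ a = (n : ℝ) ^ a * (1 / L) ^ a := by
      rw [← Real.mul_rpow (le_of_lt hn0) (by positivity)]
      congr 1
      field_simp
    have e2 : (n : ℝ) ^ a * (n : ℝ) ^ (1 - a) = (n : ℝ) := by
      rw [← Real.rpow_add hn0, show a + (1 - a) = (1:ℝ) by ring, Real.rpow_one]
    calc ((n : ℝ) / L) ^ a - 2 * n * C
        = (n : ℝ) ^ a * (1 / L) ^ a - 2 * C * ((n : ℝ) ^ a * (n : ℝ) ^ (1 - a)) := by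
          rw [e1, e2]; ring
      _ = (n : ℝ) ^ a * u n := by simp only [hu]; ring
  have hupos : ∀ᶠ n : ℕ in atTop, 0 < u n :=
    hulim.eventually_const_lt (by positivity)
  have hev1 : ∀ᶠ n : ℕ in atTop, 1 ≤ n := eventually_ge_atTop 1
  have hpos : ∀ᶠ n : ℕ in atTop, 0 < ((n : ℝ) / L) ^ a - 2 * n * C := by
    filter_upwards [hupos, hev1] with n hun hn1
    rw [hkey n hn1]
    have hn0 : (0:ℝ) < n := by exact_mod_cast hn1
    exact mul_pos (Real.rpow_pos_of_pos hn0 a) hun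
  have heq : ∀ᶠ n : ℕ in atTop,
      (u n) ^ (-(1 / a))
        = (n : ℝ) * ((((n : ℝ) / L) ^ a - 2 * n * C) ^ (-(1 / a))) := by
    filter_upwards [hupos, hev1] with n hun hn1
    have hn0 : (0:ℝ) < n := by exact_mod_cast hn1
    rw [hkey n hn1, Real.mul_rpow (by positivity) (le_of_lt hun),
      ← Real.rpow_mul (le_of_lt hn0), show a * -(1 / a) = -1 by field_simp,
      Real.rpow_neg_one, ← mul_assoc, mul_inv_cancel₀ (ne_of_gt hn0), one_mul]
  have h3 : Tendsto (fun n : ℕ => (u n) ^ (-(1 / a))) atTop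
      (nhds (((1 / L : ℝ) ^ a) ^ (-(1 / a)))) :=
    hulim.rpow_const (Or.inl (by positivity))
  have h4 : ((1 / L : ℝ) ^ a) ^ (-(1 / a)) = L := by
    rw [← Real.rpow_mul (by positivity), show a * -(1 / a) = -1 by field_simp,
      Real.rpow_neg_one, one_div, inv_inv]
  have hnd : Tendsto (fun n : ℕ => (n : ℝ) * ((((n : ℝ) / L) ^ a - 2 * n * C) ^ (-(1 / a))))
      atTop (nhds L) := by
    have := h3.congr' heq
    rwa [h4] at this
  refine ⟨hpos, hnd, ?_⟩
  have h5 : Tendsto (fun n : ℕ => (n : ℝ)⁻¹) atTop (nhds 0) :=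
    tendsto_inv_atTop_zero.comp tendsto_natCast_atTop_atTop
  have h6 := hnd.mul h5
  rw [mul_zero] at h6
  apply h6.congr'
  filter_upwards [hev1] with n hn1
  have hn0 : (n : ℝ) ≠ 0 := by positivity
  field_simp

noncomputable def phi (L : ℝ) (F : ℝ → ℝ) (N : ℕ) (x : ℕ → ℝ) : ℝ → ℝ := fun y =>
  (∑ k ∈ Finset.Ico 1 N, Set.indicator (Set.Ico (x k) (x (k + 1))) (fun _ => F (x k)) y)
  + Set.indicator (Set.Ico (x N) L ∪ Set.Ico 0 (x 1)) (fun _ => F (x N)) y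

lemma phi_meas : Measurable (phi L F N x) := by
  apply Measurable.add
  · exact Finset.measurable_sum _ fun k _ => measurable_const.indicator measurableSet_Ico
  · exact measurable_const.indicator (measurableSet_Ico.union measurableSet_Ico)

lemma phi_eq_mid (h : CircleConfigA L N x) {k : ℕ} (h1 : 1 ≤ k) (h2 : k < N)
    {y : ℝ} (hy : y ∈ Set.Ico (x k) (x (k + 1))) : phi L F N x y = F (x k) := by
  have hm := mono h.2.1
  unfold phi
  rw [Finset.sum_eq_single_of_mem k (Finset.mem_Ico.mpr ⟨h1, h2⟩)]
  · rw [Set.indicator_of_mem hy, Set.indicator_of_notMem, add_zero]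
    rintro (hc | hc)
    · exact absurd hc.1 (not_le.mpr (lt_of_lt_of_le hy.2 (hm (k + 1) N (by omega) (by omega) le_rfl)))
    · exact absurd hc.2 (not_lt.mpr (le_trans (hm 1 k le_rfl h1 (by omega)) hy.1))
  · intro j hj hjk
    rcases Finset.mem_Ico.mp hj with ⟨hj1, hjN⟩
    apply Set.indicator_of_notMem
    rcases lt_or_gt_of_ne hjk with hlt | hgt
    · intro hc
      exact absurd hc.2 (not_lt.mpr (le_trans (hm (j + 1) k (by omega) (by omega) (by omega)) hy.1))
    · intro hc
      exact absurd hc.1 (not_le.mpr (lt_of_lt_of_le hy.2 (hm (k + 1) j (by omega) (by omega) (by omega))))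

lemma phi_eq_wrap (h : CircleConfigA L N x) (hN : 1 ≤ N)
    {y : ℝ} (hy : y ∈ Set.Ico (x N) L ∪ Set.Ico 0 (x 1)) : phi L F N x y = F (x N) := by
  have hm := mono h.2.1
  unfold phi
  rw [Set.indicator_of_mem hy, Finset.sum_eq_zero, zero_add]
  intro j hj
  rcases Finset.mem_Ico.mp hj with ⟨hj1, hjN⟩
  apply Set.indicator_of_notMem
  rcases hy with hy | hy
  · intro hc
    exact absurd hc.2 (not_lt.mpr (le_trans (hm (j + 1) N (by omega) (by omega) le_rfl) hy.1))
  · intro hc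
    exact absurd hc.1 (not_le.mpr (lt_of_lt_of_le hy.2 (hm 1 j le_rfl hj1 (by omega))))

lemma find_k (hx : ∀ k, 1 ≤ k → k < N → x k < x (k + 1)) {y : ℝ} :
    ∀ n, 1 ≤ n → n ≤ N → x 1 ≤ y → y < x n →
    ∃ k, 1 ≤ k ∧ k < n ∧ x k ≤ y ∧ y < x (k + 1) := by
  intro n h1
  induction n, h1 using Nat.le_induction with
  | base => intro _ h1 h2; exact absurd h2 (not_lt.mpr h1)
  | succ n hn ih =>
      intro hN h1 h2
      by_cases hy : y < x n
      · obtain ⟨k, hk1, hk2, hk3, hk4⟩ := ih (by omega) h1 hy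
        exact ⟨k, hk1, by omega, hk3, hk4⟩
      · exact ⟨n, hn, by omega, not_lt.mp hy, h2⟩

lemma cover (h : CircleConfigA L N x) (hN : 1 ≤ N) {y : ℝ} (hy : y ∈ Set.Ico (0:ℝ) L) :
    (∃ k, 1 ≤ k ∧ k < N ∧ y ∈ Set.Ico (x k) (x (k + 1)))
      ∨ y ∈ Set.Ico (x N) L ∪ Set.Ico 0 (x 1) := by
  by_cases h1 : y < x 1
  · exact Or.inr (Or.inr ⟨hy.1, h1⟩)
  by_cases h2 : x N ≤ y
  · exact Or.inr (Or.inl ⟨h2, hy.2⟩)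
  obtain ⟨k, hk1, hk2, hk3, hk4⟩ := find_k h.2.1 N hN le_rfl (not_lt.mp h1) (not_le.mp h2)
  exact Or.inl ⟨k, hk1, hk2, hk3, hk4⟩

lemma phi_bound (h : CircleConfigA L N x) (hN : 1 ≤ N)
    (hFb : ∀ y ∈ Set.Ico (0:ℝ) L, |F y| ≤ C) {y : ℝ} (hy : y ∈ Set.Ico (0:ℝ) L) :
    |phi L F N x y| ≤ C := by
  rcases cover h hN hy with ⟨k, h1, h2, hk⟩ | hw
  · rw [phi_eq_mid h h1 h2 hk]
    exact hFb _ (mem_Ico' h h1 (by omega))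
  · rw [phi_eq_wrap h hN hw]
    exact hFb _ (mem_Ico' h hN le_rfl)

open MeasureTheory in
lemma phi_integral (h : CircleConfigA L N x) (hN : 1 ≤ N) (hL : 0 < L) :
    ∫ y in Set.Ico (0:ℝ) L, phi L F N x y
      = ∑ k ∈ Finset.Icc 1 N, F (x k) * cgap L N x k := by
  have hm := mono h.2.1
  have hx0 : 0 ≤ x 1 := h.1
  have hxN : x N < L := h.2.2
  have h1N : x 1 ≤ x N := hm 1 N le_rfl hN le_rfl
  set μ := volume.restrict (Set.Ico (0:ℝ) L) with hμ
  haveI : IsFiniteMeasure μ := by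
    constructor
    rw [hμ, Measure.restrict_apply_univ, Real.volume_Ico]
    exact ENNReal.ofReal_lt_top
  have hfin : ∀ s : Set ℝ, MeasurableSet s → ∀ c : ℝ,
      Integrable (Set.indicator s (fun _ => c)) μ := fun s hs c =>
    (integrable_const c).indicator hs
  have hIco : ∀ u v c : ℝ, u ≤ v → Set.Ico u v ⊆ Set.Ico 0 L →
      (∫ y, Set.indicator (Set.Ico u v) (fun _ => c) y ∂μ) = c * (v - u) := by
    intro u v c huv hsub
    rw [integral_indicator measurableSet_Ico, setIntegral_const, hμ, measureReal_def,
      Measure.restrict_apply measurableSet_Ico, Set.inter_eq_left.mpr hsub,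
      Real.volume_Ico, ENNReal.toReal_ofReal (by linarith), smul_eq_mul, mul_comm]
  have hwrap : (∫ y, Set.indicator (Set.Ico (x N) L ∪ Set.Ico 0 (x 1)) (fun _ => F (x N)) y ∂μ)
      = F (x N) * (L - x N + x 1) := by
    rw [integral_indicator (measurableSet_Ico.union measurableSet_Ico), setIntegral_const, hμ, measureReal_def,
      Measure.restrict_apply (measurableSet_Ico.union measurableSet_Ico)]
    have hsub : (Set.Ico (x N) L ∪ Set.Ico 0 (x 1)) ∩ Set.Ico 0 L
        = Set.Ico (x N) L ∪ Set.Ico 0 (x 1) := by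
      apply Set.inter_eq_left.mpr
      apply Set.union_subset
      · intro z hz; exact ⟨le_trans (le_trans hx0 h1N) hz.1, hz.2⟩
      · intro z hz; exact ⟨hz.1, lt_of_lt_of_le hz.2 (le_trans h1N hxN.le)⟩
    have hdis : Disjoint (Set.Ico (x N) L) (Set.Ico (0:ℝ) (x 1)) := by
      rw [Set.disjoint_left]
      intro z hz1 hz2
      have := hz1.1; have := hz2.2
      linarith
    rw [hsub, measure_union hdis measurableSet_Ico, Real.volume_Ico, Real.volume_Ico,
      sub_zero (x 1), ← ENNReal.ofReal_add (by linarith) hx0, ENNReal.toReal_ofReal (by linarith),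
      smul_eq_mul, mul_comm]
  unfold phi
  rw [integral_add (integrable_finset_sum _ fun k _ => hfin _ measurableSet_Ico _)
      (hfin _ (measurableSet_Ico.union measurableSet_Ico) _),
    integral_finset_sum _ fun k _ => hfin _ measurableSet_Ico _, hwrap]
  have hterm : ∀ k ∈ Finset.Ico 1 N,
      (∫ y, Set.indicator (Set.Ico (x k) (x (k + 1))) (fun _ => F (x k)) y ∂μ)
        = F (x k) * (x (k + 1) - x k) := by
    intro k hk
    rcases Finset.mem_Ico.mp hk with ⟨hk1, hk2⟩
    refine hIco _ _ _ (hm k (k + 1) hk1 (by omega) (by omega)) ?_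
    intro z hz
    constructor
    · exact le_trans (le_trans hx0 (hm 1 k le_rfl hk1 (by omega))) hz.1
    · exact lt_of_lt_of_le hz.2 (le_trans (hm (k + 1) N (by omega) (by omega) le_rfl) hxN.le)
  rw [Finset.sum_congr rfl hterm, ← Finset.Ico_add_one_right_eq_Icc,
    Finset.sum_Ico_succ_top (by omega : 1 ≤ N)]
  have hcg : ∀ k ∈ Finset.Ico 1 N, F (x k) * cgap L N x k = F (x k) * (x (k + 1) - x k) := by
    intro k hk
    rw [show cgap L N x k = x (k + 1) - x k by simp [cgap, (Finset.mem_Ico.mp hk).2]]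
  rw [Finset.sum_congr rfl hcg, show cgap L N x N = L - x N + x 1 by simp [cgap]]

end FP


open MeasureTheory

/-- If `F` is bounded, left-continuous with finitely many discontinuities,
and fixed configurations exist for a sequence `N_p → ∞`, then `∫_0^L F = 0`. -/
theorem force_is_potential (a L C : ℝ) (ha : 1 < a) (hL : 0 < L) (F : ℝ → ℝ)
    (hFb : ∀ y ∈ Set.Ico (0 : ℝ) L, |F y| ≤ C)
    (hleft : ∀ y ∈ Set.Ioo (0 : ℝ) L, ContinuousWithinAt F (Set.Iio y) y)
    (hfin : {y ∈ Set.Ioo (0 : ℝ) L | ¬ ContinuousAt F y}.Finite)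
    (Nseq : ℕ → ℕ) (hN : Tendsto Nseq atTop atTop)
    (x : ℕ → ℕ → ℝ) (hx : ∀ p, CircleFixedA a L F (Nseq p) (x p)) :
    ∫ y in (0 : ℝ)..L, F y = 0 := by
  classical
  have hC : 0 ≤ C := le_trans (abs_nonneg _) (hFb 0 ⟨le_refl 0, hL⟩)
  set μ : Measure ℝ := volume.restrict (Set.Ico (0:ℝ) L) with hμ
  haveI : IsFiniteMeasure μ := by
    constructor
    rw [hμ, Measure.restrict_apply_univ, Real.volume_Ico]
    exact ENNReal.ofReal_lt_top
  -- the open set of continuity points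
  set S : Set ℝ := {y ∈ Set.Ioo (0:ℝ) L | ¬ ContinuousAt F y} with hS
  set U : Set ℝ := Set.Ioo (0:ℝ) L \ S with hU
  have hUopen : IsOpen U := isOpen_Ioo.sdiff hfin.isClosed
  have hUsub : U ⊆ Set.Ioo 0 L := Set.diff_subset
  have hUc : ∀ y ∈ U, ContinuousAt F y := by
    intro y hy
    by_contra hc
    exact hy.2 ⟨hy.1, hc⟩
  have haes : Set.Ico (0:ℝ) L =ᵐ[volume] U := by
    rw [MeasureTheory.ae_eq_set]
    constructor
    · refine measure_mono_null (t := {(0:ℝ)} ∪ S) ?_ ?_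
      · intro y hy
        rcases hy with ⟨hy1, hy2⟩
        by_cases hyo : y ∈ Set.Ioo (0:ℝ) L
        · right
          by_contra hyS
          exact hy2 ⟨hyo, hyS⟩
        · left
          have : y = 0 := by
            rcases hy1 with ⟨h01, h02⟩
            by_contra hne
            exact hyo ⟨lt_of_le_of_ne h01 (Ne.symm hne), h02⟩
          simp [this]
      · exact measure_union_null (measure_singleton 0) (hfin.measure_zero volume)
    · have : U \ Set.Ico 0 L = ∅ := by
        rw [Set.diff_eq_empty]
        exact fun y hy => ⟨(hUsub hy).1.le, (hUsub hy).2⟩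
      rw [this]
      simp
  have hrestr : μ = volume.restrict U := by
    rw [hμ]
    exact Measure.restrict_congr_set haes
  -- the good index set
  set Good : ℕ → Prop :=
    fun p => 1 ≤ Nseq p ∧ 0 < ((Nseq p : ℝ) / L) ^ a - 2 * (Nseq p) * C with hGood
  obtain ⟨hpos, hNδ', hδ0'⟩ := FP.delta_asymp ha hL hC
  set δ : ℕ → ℝ := fun p => (((Nseq p : ℝ) / L) ^ a - 2 * (Nseq p) * C) ^ (-(1 / a)) with hδ
  have hgoodev : ∀ᶠ p in atTop, Good p := by
    filter_upwards [hN.eventually (eventually_ge_atTop 1), hN.eventually hpos] with p h1 h2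
    exact ⟨h1, h2⟩
  have hmesh0 : Tendsto δ atTop (nhds 0) := hδ0'.comp hN
  have hNδ : Tendsto (fun p => (Nseq p : ℝ) * δ p) atTop (nhds L) := hNδ'.comp hN
  -- the step functions
  set ψ : ℕ → ℝ → ℝ :=
    fun p => if Good p then FP.phi L F (Nseq p) (x p) else fun _ => 0 with hψ
  -- the Riemann sums
  set Ssum : ℕ → ℝ :=
    fun p => ∑ k ∈ Finset.Icc 1 (Nseq p), F (x p k) * cgap L (Nseq p) (x p) k with hSsum
  have hS0 : Tendsto Ssum atTop (nhds 0) := by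
    rw [tendsto_zero_iff_abs_tendsto_zero]
    refine squeeze_zero' (g := fun p => 2 * C * ((Nseq p : ℝ) * δ p - L))
      (Eventually.of_forall fun p => abs_nonneg _) ?_ ?_
    · filter_upwards [hgoodev] with p hg
      exact FP.sum_bound (hx p) ha hL hFb hC hg.1 hg.2
    · have := (hNδ.sub (tendsto_const_nhds (x := L))).const_mul (2 * C)
      simpa using this
  -- dominated convergence
  have hDCT : Tendsto (fun p => ∫ y, ψ p y ∂μ) atTop (nhds (∫ y, F y ∂μ)) := by
    refine tendsto_integral_of_dominated_convergence (fun _ => C) ?_ (integrable_const C) ?_ ?_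
    · intro p
      by_cases hg : Good p
      · rw [hψ]
        simp only [if_pos hg]
        exact (FP.phi_meas).aestronglyMeasurable
      · simp only [hψ, if_neg hg]
        exact aestronglyMeasurable_const
    · intro p
      filter_upwards [ae_restrict_mem measurableSet_Ico] with y hy
      by_cases hg : Good p
      · rw [hψ]
        simp only [if_pos hg]
        rw [Real.norm_eq_abs]
        exact FP.phi_bound (hx p).1 hg.1 hFb hy
      · simp only [hψ, if_neg hg]
        simpa using hC
    · have hUae : ∀ᵐ y ∂μ, y ∈ U := by
        rw [hrestr]
        exact ae_restrict_mem hUopen.measurableSet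
      filter_upwards [hUae] with y hy
      have hyI : y ∈ Set.Ioo (0:ℝ) L := hUsub hy
      have hyc : ContinuousAt F y := hUc y hy
      rw [Metric.tendsto_nhds]
      intro ε hε
      obtain ⟨δ₂, hδ₂, hδ₂'⟩ := Metric.continuousAt_iff.mp hyc ε hε
      have hcpos : 0 < min δ₂ (min y (L - y)) := by
        rcases hyI with ⟨hy1, hy2⟩
        simp only [lt_min_iff]
        exact ⟨hδ₂, hy1, by linarith⟩
      filter_upwards [hgoodev, hmesh0.eventually_lt_const hcpos] with p hg hm2
      have hmesh := FP.mesh_bound (hx p) ha hL hFb hC hg.1 hg.2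
      have hx0 : 0 ≤ x p 1 := (hx p).1.1
      have hxNL : x p (Nseq p) < L := (hx p).1.2.2
      rw [hψ]
      simp only [if_pos hg]
      rcases FP.cover (hx p).1 hg.1 ⟨hyI.1.le, hyI.2⟩ with ⟨k, h1, h2, hk⟩ | hw
      · rw [FP.phi_eq_mid (hx p).1 h1 h2 hk]
        apply hδ₂'
        rw [Real.dist_eq, abs_sub_lt_iff]
        have hck : cgap L (Nseq p) (x p) k = x p (k + 1) - x p k := by simp [cgap, h2]
        have hle := hmesh k (Finset.mem_Icc.mpr ⟨h1, by omega⟩)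
        rw [hck] at hle
        have hd2 : δ p < δ₂ := lt_of_lt_of_le hm2 (min_le_left _ _)
        rcases hk with ⟨hk1, hk2⟩
        constructor <;> linarith
      · exfalso
        have hδn := hmesh (Nseq p) (Finset.mem_Icc.mpr ⟨hg.1, le_rfl⟩)
        have hcgN : cgap L (Nseq p) (x p) (Nseq p) = L - x p (Nseq p) + x p 1 := by
          simp [cgap]
        rw [hcgN] at hδn
        have hmy : δ p < y := lt_of_lt_of_le hm2 (le_trans (min_le_right _ _) (min_le_left _ _))
        have hmLy : δ p < L - y :=
          lt_of_lt_of_le hm2 (le_trans (min_le_right _ _) (min_le_right _ _))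
        rcases hw with hw | hw
        · rcases hw with ⟨hw1, _⟩
          linarith
        · rcases hw with ⟨_, hw2⟩
          linarith
  -- identify the integrals of ψ with the Riemann sums
  have hint_eq : ∀ᶠ p in atTop, (∫ y, ψ p y ∂μ) = Ssum p := by
    filter_upwards [hgoodev] with p hg
    rw [hψ]
    simp only [if_pos hg]
    exact FP.phi_integral (hx p).1 hg.1 hL
  have hψ0 : Tendsto (fun p => ∫ y, ψ p y ∂μ) atTop (nhds 0) :=
    hS0.congr' (hint_eq.mono fun p h => h.symm)
  have hF0 : (∫ y, F y ∂μ) = 0 := tendsto_nhds_unique hDCT hψ0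
  rw [intervalIntegral.integral_of_le hL.le, MeasureTheory.integral_Ioc_eq_integral_Ioo,
    ← MeasureTheory.integral_Ico_eq_integral_Ioo]
  exact hF0
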